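/- Let c > 0 and let v : (0,∞) → ℝ be continuously differentiable with v'(r) ≤ -c·v(r)² for all r > 0, and suppose limsup_{r→0⁺} r·v(r) ≤ 1/c. Then v(r) ≤ 1/(c·r) for all r > 0. -/

import Mathlib

/-- Riccati comparison inequality: if `v` is continuously differentiable on `(0,∞)` with
`v' ≤ -c·v²` and `limsup_{r→0⁺} r·v(r) ≤ 1/c`, then `v(r) ≤ 1/(c·r)` for all `r > 0`. -/
theorem riccati_comparison (c : ℝ) (hc : 0 < c) (v v' : ℝ → ℝ)
    (hderiv : ∀ r ∈ Set.Ioi (0 : ℝ), HasDerivAt v (v' r) r)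
    (hcont : ContinuousOn v' (Set.Ioi (0 : ℝ)))
    (hineq : ∀ r ∈ Set.Ioi (0 : ℝ), v' r ≤ -c * (v r) ^ 2)
    (hlimsup : Filter.limsup (fun r => r * v r) (nhdsWithin 0 (Set.Ioi (0 : ℝ))) ≤ 1 / c) :
    ∀ r ∈ Set.Ioi (0 : ℝ), v r ≤ 1 / (c * r) := by
  have hv'nonpos : ∀ r ∈ Set.Ioi (0 : ℝ), v' r ≤ 0 := fun r hr =>
    (hineq r hr).trans (by nlinarith [sq_nonneg (v r)])
  have hanti : AntitoneOn v (Set.Ioi (0 : ℝ)) := by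
    apply antitoneOn_of_deriv_nonpos (convex_Ioi 0)
    · exact fun r hr => (hderiv r hr).continuousAt.continuousWithinAt
    · intro r hr
      rw [interior_Ioi] at hr
      exact (hderiv r hr).differentiableAt.differentiableWithinAt
    · intro r hr
      rw [interior_Ioi] at hr
      rw [(hderiv r hr).deriv]
      exact hv'nonpos r hr
  intro r₀ hr₀
  by_contra h
  push_neg at h
  have hr₀' : (0 : ℝ) < r₀ := hr₀
  have hv₀pos : 0 < v r₀ := lt_trans (by positivity) h
  have hvlb : ∀ a, 0 < a → a ≤ r₀ → v r₀ ≤ v a := fun a ha hale =>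
    hanti (Set.mem_Ioi.mpr ha) hr₀ hale
  set u : ℝ → ℝ := fun r => (v r)⁻¹ with hu
  have hur₀pos : 0 < u r₀ := by positivity
  have hur₀ : u r₀ < c * r₀ := by
    have h1 : (v r₀)⁻¹ < (1 / (c * r₀))⁻¹ := by
      apply inv_strictAnti₀ (by positivity) h
    simpa [one_div] using h1
  set a : ℝ := min r₀ ((c * r₀ - u r₀) / (2 * c)) with ha
  have hapos : 0 < a := lt_min hr₀' (div_pos (by linarith) (by positivity))
  have hale : a ≤ r₀ := min_le_left _ _
  have ha2 : a ≤ (c * r₀ - u r₀) / (2 * c) := min_le_right _ _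
  have hvxpos : ∀ x ∈ Set.Icc a r₀, 0 < v x := fun x hx =>
    lt_of_lt_of_le hv₀pos (hvlb x (lt_of_lt_of_le hapos hx.1) hx.2)
  have hxIoi : ∀ x ∈ Set.Icc a r₀, x ∈ Set.Ioi (0 : ℝ) := fun x hx =>
    Set.mem_Ioi.mpr (lt_of_lt_of_le hapos hx.1)
  have hgderiv : ∀ x ∈ Set.Icc a r₀,
      HasDerivAt (fun r => u r - c * r) (-v' x / (v x) ^ 2 - c) x := by
    intro x hx
    have h1 : HasDerivAt u (-v' x / (v x) ^ 2) x :=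
      (hderiv x (hxIoi x hx)).inv (ne_of_gt (hvxpos x hx))
    have h2 := h1.sub ((hasDerivAt_id x).const_mul c)
    rw [mul_one] at h2
    exact h2
  have hmono : MonotoneOn (fun r => u r - c * r) (Set.Icc a r₀) := by
    apply monotoneOn_of_deriv_nonneg (convex_Icc a r₀)
    · exact fun x hx => (hgderiv x hx).continuousAt.continuousWithinAt
    · intro x hx
      rw [interior_Icc] at hx
      exact (hgderiv x (Set.Ioo_subset_Icc_self hx)).differentiableAt.differentiableWithinAt
    · intro x hx
      rw [interior_Icc] at hx
      have hx' := Set.Ioo_subset_Icc_self hx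
      rw [(hgderiv x hx').deriv]
      have hvpos := hvxpos x hx'
      have := hineq x (hxIoi x hx')
      have h2 : c * (v x) ^ 2 ≤ -v' x := by linarith
      rw [sub_nonneg, le_div_iff₀ (by positivity)]
      linarith
  have hkey : u a - c * a ≤ u r₀ - c * r₀ :=
    hmono (Set.mem_Icc.mpr ⟨le_refl a, hale⟩) (Set.mem_Icc.mpr ⟨hale, le_refl r₀⟩) hale
  have huapos : 0 < u a := by
    have := hvxpos a (Set.mem_Icc.mpr ⟨le_refl a, hale⟩)
    positivity
  have hca : c * a ≤ (c * r₀ - u r₀) / 2 := by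
    have := mul_le_mul_of_nonneg_left ha2 (le_of_lt hc)
    have heq : c * ((c * r₀ - u r₀) / (2 * c)) = (c * r₀ - u r₀) / 2 := by
      field_simp
    linarith
  linarith
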